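/- Singleton case, covariance: let ξ, η : Ω → ℝ^d be random vectors with 𝔼‖ξ‖² + 𝔼‖η‖² < ∞. Then ∫_{S^{d-1}} Cov(⟨u,ξ⟩, ⟨u,η⟩) dσ(u) = (1/d)·∑_{i=1}^d Cov(ξ_i, η_i), where ξ_i, η_i denote the standard coordinates. Consequently, for the singleton support profiles h_X(ω,u) = ⟨u,ξ(ω)⟩ and h_Y(ω,u) = ⟨u,η(ω)⟩ one has Cov_loc(X,Y) = (1/d)·∑_i Cov(ξ_i,η_i), and if ∑_i Var(ξ_i) > 0 and ∑_i Var(η_i) > 0 then Corr_loc(X,Y) = ∑_i Cov(ξ_i,η_i) / √((∑_i Var(ξ_i))·(∑_i Var(η_i))). -/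

import Mathlib

open MeasureTheory
open scoped RealInnerProductSpace

noncomputable section

/-- The unit sphere `S^{d-1}` in Euclidean space `ℝ^d`. -/
abbrev Sph (d : ℕ) := Metric.sphere (0 : EuclideanSpace ℝ (Fin d)) 1

/-- Covariance of two real random variables w.r.t. a measure `P`. -/
def cov' {Ω : Type*} [MeasurableSpace Ω] (P : Measure Ω) (X Y : Ω → ℝ) : ℝ :=
  ∫ ω, (X ω - ∫ x, X x ∂P) * (Y ω - ∫ x, Y x ∂P) ∂P

/-- Variance of a real random variable w.r.t. a measure `P`. -/
def var' {Ω : Type*} [MeasurableSpace Ω] (P : Measure Ω) (X : Ω → ℝ) : ℝ := cov' P X X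

/-- Size (even) component of a support profile. -/
def evenPart {Ω : Type*} {d : ℕ} (h : Ω × Sph d → ℝ) : Ω × Sph d → ℝ :=
  fun p => (h p + h (p.1, -p.2)) / 2

/-- Location (odd) component of a support profile. -/
def oddPart {Ω : Type*} {d : ℕ} (h : Ω × Sph d → ℝ) : Ω × Sph d → ℝ :=
  fun p => (h p - h (p.1, -p.2)) / 2

/-- Size covariance `Cov_size(X,Y)`. -/
def covSize {Ω : Type*} [MeasurableSpace Ω] {d : ℕ} (P : Measure Ω) (σ : Measure (Sph d))
    (hX hY : Ω × Sph d → ℝ) : ℝ :=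
  ∫ u, cov' P (fun ω => evenPart hX (ω, u)) (fun ω => evenPart hY (ω, u)) ∂σ

/-- Location covariance `Cov_loc(X,Y)`. -/
def covLoc {Ω : Type*} [MeasurableSpace Ω] {d : ℕ} (P : Measure Ω) (σ : Measure (Sph d))
    (hX hY : Ω × Sph d → ℝ) : ℝ :=
  ∫ u, cov' P (fun ω => oddPart hX (ω, u)) (fun ω => oddPart hY (ω, u)) ∂σ

/-- Total covariance `Cov_tot(X,Y)`. -/
def covTot {Ω : Type*} [MeasurableSpace Ω] {d : ℕ} (P : Measure Ω) (σ : Measure (Sph d))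
    (hX hY : Ω × Sph d → ℝ) : ℝ :=
  covSize P σ hX hY + covLoc P σ hX hY

/-- `Var_size(X)`. -/
def varSize {Ω : Type*} [MeasurableSpace Ω] {d : ℕ} (P : Measure Ω) (σ : Measure (Sph d))
    (hX : Ω × Sph d → ℝ) : ℝ := covSize P σ hX hX

/-- `Var_loc(X)`. -/
def varLoc {Ω : Type*} [MeasurableSpace Ω] {d : ℕ} (P : Measure Ω) (σ : Measure (Sph d))
    (hX : Ω × Sph d → ℝ) : ℝ := covLoc P σ hX hX

/-- `Var_tot(X)`. -/
def varTot {Ω : Type*} [MeasurableSpace Ω] {d : ℕ} (P : Measure Ω) (σ : Measure (Sph d))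
    (hX : Ω × Sph d → ℝ) : ℝ := varSize P σ hX + varLoc P σ hX

/-- A support profile: jointly measurable and square-integrable against `P ⊗ σ`. -/
def IsSupportProfile {Ω : Type*} [MeasurableSpace Ω] {d : ℕ} (P : Measure Ω)
    (σ : Measure (Sph d)) (h : Ω × Sph d → ℝ) : Prop :=
  Measurable h ∧ Integrable (fun p => (h p) ^ 2) (P.prod σ)

/-- `Corr_loc(X,Y)`. -/
def corrLoc {Ω : Type*} [MeasurableSpace Ω] {d : ℕ} (P : Measure Ω) (σ : Measure (Sph d))
    (hX hY : Ω × Sph d → ℝ) : ℝ :=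
  covLoc P σ hX hY / Real.sqrt (varLoc P σ hX * varLoc P σ hY)

/-- The map induced on the unit sphere by a linear isometric equivalence of `ℝ^d`. -/
def sphereIso {d : ℕ} (L : EuclideanSpace ℝ (Fin d) ≃ₗᵢ[ℝ] EuclideanSpace ℝ (Fin d))
    (u : Sph d) : Sph d :=
  ⟨L u, by
    have hu : ‖(u : EuclideanSpace ℝ (Fin d))‖ = 1 :=
      mem_sphere_zero_iff_norm.mp u.2
    simp [mem_sphere_zero_iff_norm, L.norm_map, hu]⟩


section Aux

variable {Ω : Type*} [MeasurableSpace Ω] {d : ℕ}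

lemma euclid_norm_sq (x : EuclideanSpace ℝ (Fin d)) : ‖x‖ ^ 2 = ∑ i, (x i) ^ 2 := by
  rw [EuclideanSpace.norm_eq, Real.sq_sqrt (by positivity)]
  simp [sq_abs]

lemma memLp2_mul_integrable {P : Measure Ω} {f g : Ω → ℝ}
    (hf : MemLp f 2 P) (hg : MemLp g 2 P) : Integrable (fun ω => f ω * g ω) P := by
  have := hg.smul (r := 1) hf
  rw [memLp_one_iff_integrable] at this
  exact this

lemma coord_measurable {ξ : Ω → EuclideanSpace ℝ (Fin d)} (hm : Measurable ξ) (i : Fin d) :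
    Measurable (fun ω => ξ ω i) :=
  ((EuclideanSpace.proj i : EuclideanSpace ℝ (Fin d) →L[ℝ] ℝ).continuous.measurable).comp hm

lemma coord_memLp {P : Measure Ω} [IsProbabilityMeasure P]
    {ξ : Ω → EuclideanSpace ℝ (Fin d)} (hm : Measurable ξ)
    (h2 : Integrable (fun ω => ‖ξ ω‖ ^ 2) P) (i : Fin d) :
    MemLp (fun ω => ξ ω i) 2 P := by
  rw [memLp_two_iff_integrable_sq (coord_measurable hm i).aestronglyMeasurable]
  refine h2.mono' ((coord_measurable hm i).pow_const 2).aestronglyMeasurable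
    (Filter.Eventually.of_forall fun ω => ?_)
  rw [Real.norm_eq_abs, abs_of_nonneg (sq_nonneg _), euclid_norm_sq]
  exact Finset.single_le_sum (fun k _ => sq_nonneg (ξ ω k)) (Finset.mem_univ i)

/-- Expansion of the covariance of projections as a quadratic form. -/
lemma cov'_inner_expand (P : Measure Ω) [IsProbabilityMeasure P]
    {ξ η : Ω → EuclideanSpace ℝ (Fin d)} (hξm : Measurable ξ) (hηm : Measurable η)
    (hξ2 : Integrable (fun ω => ‖ξ ω‖ ^ 2) P) (hη2 : Integrable (fun ω => ‖η ω‖ ^ 2) P)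
    (u : EuclideanSpace ℝ (Fin d)) :
    cov' P (fun ω => ⟪u, ξ ω⟫) (fun ω => ⟪u, η ω⟫)
      = ∑ i, ∑ j, u i * u j * cov' P (fun ω => ξ ω i) (fun ω => η ω j) := by
  have hXLp : ∀ i, MemLp (fun ω => ξ ω i) 2 P := coord_memLp hξm hξ2
  have hYLp : ∀ i, MemLp (fun ω => η ω i) 2 P := coord_memLp hηm hη2
  set Xc : Fin d → Ω → ℝ := fun i ω => ξ ω i - ∫ x, ξ x i ∂P with hXc
  set Yc : Fin d → Ω → ℝ := fun j ω => η ω j - ∫ x, η x j ∂P with hYc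
  have hXcLp : ∀ i, MemLp (Xc i) 2 P := fun i => (hXLp i).sub (memLp_const _)
  have hYcLp : ∀ j, MemLp (Yc j) 2 P := fun j => (hYLp j).sub (memLp_const _)
  have hmeanX : (∫ ω, ⟪u, ξ ω⟫ ∂P) = ∑ i, u i * ∫ x, ξ x i ∂P := by
    have h1 : (fun ω => ⟪u, ξ ω⟫) = fun ω => ∑ i, u i * ξ ω i := by
      funext ω; simp [PiLp.inner_apply, RCLike.inner_apply, conj_trivial, mul_comm]
    rw [h1, integral_finset_sum _ (fun i _ => ((hXLp i).integrable one_le_two).const_mul _)]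
    simp [integral_const_mul]
  have hmeanY : (∫ ω, ⟪u, η ω⟫ ∂P) = ∑ j, u j * ∫ x, η x j ∂P := by
    have h1 : (fun ω => ⟪u, η ω⟫) = fun ω => ∑ j, u j * η ω j := by
      funext ω; simp [PiLp.inner_apply, RCLike.inner_apply, conj_trivial, mul_comm]
    rw [h1, integral_finset_sum _ (fun j _ => ((hYLp j).integrable one_le_two).const_mul _)]
    simp [integral_const_mul]
  have hint : ∀ i j, Integrable (fun ω => u i * u j * (Xc i ω * Yc j ω)) P := fun i j =>
    (memLp2_mul_integrable (hXcLp i) (hYcLp j)).const_mul _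
  have hrw : (fun ω => (⟪u, ξ ω⟫ - ∫ x, ⟪u, ξ x⟫ ∂P) * (⟪u, η ω⟫ - ∫ x, ⟪u, η x⟫ ∂P))
      = fun ω => ∑ i, ∑ j, u i * u j * (Xc i ω * Yc j ω) := by
    funext ω
    rw [hmeanX, hmeanY]
    have hx : ⟪u, ξ ω⟫ - ∑ i, u i * ∫ x, ξ x i ∂P = ∑ i, u i * Xc i ω := by
      simp only [PiLp.inner_apply, RCLike.inner_apply, conj_trivial]
      rw [← Finset.sum_sub_distrib]
      exact Finset.sum_congr rfl fun i _ => by rw [mul_comm]; exact (mul_sub _ _ _).symm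
    have hy : ⟪u, η ω⟫ - ∑ j, u j * ∫ x, η x j ∂P = ∑ j, u j * Yc j ω := by
      simp only [PiLp.inner_apply, RCLike.inner_apply, conj_trivial]
      rw [← Finset.sum_sub_distrib]
      exact Finset.sum_congr rfl fun j _ => by rw [mul_comm]; exact (mul_sub _ _ _).symm
    rw [hx, hy, Finset.sum_mul_sum]
    exact Finset.sum_congr rfl fun i _ => Finset.sum_congr rfl fun j _ => by ring
  rw [cov', hrw, integral_finset_sum _ (fun i _ => integrable_finset_sum _ (fun j _ => hint i j))]
  refine Finset.sum_congr rfl fun i _ => ?_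
  rw [integral_finset_sum _ (fun j _ => hint i j)]
  refine Finset.sum_congr rfl fun j _ => ?_
  rw [integral_const_mul]
  rfl

end Aux

section Sphere

variable {d : ℕ}

lemma sph_coord_continuous (i : Fin d) :
    Continuous (fun u : Sph d => (u : EuclideanSpace ℝ (Fin d)) i) :=
  (EuclideanSpace.proj i : EuclideanSpace ℝ (Fin d) →L[ℝ] ℝ).continuous.comp
    continuous_subtype_val

lemma sph_coord_abs_le (u : Sph d) (i : Fin d) :
    |(u : EuclideanSpace ℝ (Fin d)) i| ≤ 1 := by
  have hu : ‖(u : EuclideanSpace ℝ (Fin d))‖ = 1 := mem_sphere_zero_iff_norm.mp u.2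
  have h1 : ((u : EuclideanSpace ℝ (Fin d)) i) ^ 2 ≤ 1 := by
    have := Finset.single_le_sum (f := fun k => ((u : EuclideanSpace ℝ (Fin d)) k) ^ 2)
      (fun k _ => sq_nonneg _) (Finset.mem_univ i)
    rw [← euclid_norm_sq, hu] at this
    simpa using this
  nlinarith [abs_nonneg ((u : EuclideanSpace ℝ (Fin d)) i), sq_abs ((u : EuclideanSpace ℝ (Fin d)) i)]

lemma sph_mul_integrable (σ : Measure (Sph d)) [IsProbabilityMeasure σ] (i j : Fin d) :
    Integrable (fun u : Sph d =>
      (u : EuclideanSpace ℝ (Fin d)) i * (u : EuclideanSpace ℝ (Fin d)) j) σ := by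
  refine (integrable_const (1 : ℝ)).mono'
    ((sph_coord_continuous i).mul (sph_coord_continuous j)).aestronglyMeasurable
    (Filter.Eventually.of_forall fun u => ?_)
  rw [Real.norm_eq_abs, abs_mul]
  exact mul_le_one₀ (sph_coord_abs_le u i) (abs_nonneg _) (sph_coord_abs_le u j)

lemma integral_comp_sphereIso (σ : Measure (Sph d)) [IsProbabilityMeasure σ]
    (hσinv : ∀ L : EuclideanSpace ℝ (Fin d) ≃ₗᵢ[ℝ] EuclideanSpace ℝ (Fin d),
      Measure.map (sphereIso L) σ = σ)
    (L : EuclideanSpace ℝ (Fin d) ≃ₗᵢ[ℝ] EuclideanSpace ℝ (Fin d))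
    (f : EuclideanSpace ℝ (Fin d) → ℝ) (hf : Continuous f) :
    ∫ u : Sph d, f (L (u : EuclideanSpace ℝ (Fin d))) ∂σ
      = ∫ u : Sph d, f (u : EuclideanSpace ℝ (Fin d)) ∂σ := by
  have hcont : Continuous (sphereIso L) :=
    Continuous.subtype_mk (L.continuous.comp continuous_subtype_val) _
  have h1 : (∫ u : Sph d, f (u : EuclideanSpace ℝ (Fin d)) ∂σ)
      = ∫ u : Sph d, f (u : EuclideanSpace ℝ (Fin d)) ∂(Measure.map (sphereIso L) σ) := by
    rw [hσinv L]
  rw [h1, integral_map (f := fun u : Sph d => f (u : EuclideanSpace ℝ (Fin d)))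
    hcont.measurable.aemeasurable
    ((hf.comp continuous_subtype_val).aestronglyMeasurable)]
  rfl

/-- Moments of order two of an isometry-invariant probability measure on the sphere. -/
lemma sphere_second_moment (hd : 0 < d) (σ : Measure (Sph d)) [IsProbabilityMeasure σ]
    (hσinv : ∀ L : EuclideanSpace ℝ (Fin d) ≃ₗᵢ[ℝ] EuclideanSpace ℝ (Fin d),
      Measure.map (sphereIso L) σ = σ) (i j : Fin d) :
    ∫ u : Sph d, (u : EuclideanSpace ℝ (Fin d)) i * (u : EuclideanSpace ℝ (Fin d)) j ∂σ
      = if i = j then (1 / d : ℝ) else 0 := by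
  rcases eq_or_ne i j with rfl | hij
  · rw [if_pos rfl]
    -- all diagonal moments agree
    have hdiag : ∀ k l : Fin d,
        (∫ u : Sph d, (u : EuclideanSpace ℝ (Fin d)) k * (u : EuclideanSpace ℝ (Fin d)) k ∂σ)
        = ∫ u : Sph d, (u : EuclideanSpace ℝ (Fin d)) l * (u : EuclideanSpace ℝ (Fin d)) l ∂σ := by
      intro k l
      have hc : Continuous (fun x : EuclideanSpace ℝ (Fin d) => x k * x k) :=
        ((EuclideanSpace.proj k).continuous).mul ((EuclideanSpace.proj k).continuous)
      have := integral_comp_sphereIso σ hσinv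
        (LinearIsometryEquiv.piLpCongrLeft 2 ℝ ℝ (Equiv.swap k l))
        (fun x => x k * x k) hc
      rw [← this]
      refine integral_congr_ae (Filter.Eventually.of_forall fun u => ?_)
      have happ : ∀ m : Fin d,
          (LinearIsometryEquiv.piLpCongrLeft 2 ℝ ℝ (Equiv.swap k l)
            (u : EuclideanSpace ℝ (Fin d))) m
          = (u : EuclideanSpace ℝ (Fin d)) (Equiv.swap k l m) := by
        intro m
        simp only [LinearIsometryEquiv.piLpCongrLeft_apply, Equiv.piCongrLeft'_apply,
          Equiv.symm_swap]
      simp only [happ]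
      rw [Equiv.swap_apply_left]
    have hsum : ∑ k : Fin d,
        (∫ u : Sph d, (u : EuclideanSpace ℝ (Fin d)) k * (u : EuclideanSpace ℝ (Fin d)) k ∂σ)
        = 1 := by
      rw [← integral_finset_sum _ (fun k _ => sph_mul_integrable σ k k)]
      have hpt : ∀ u : Sph d, (∑ k : Fin d,
          (u : EuclideanSpace ℝ (Fin d)) k * (u : EuclideanSpace ℝ (Fin d)) k) = 1 := by
        intro u
        have hu : ‖(u : EuclideanSpace ℝ (Fin d))‖ = 1 := mem_sphere_zero_iff_norm.mp u.2
        have h2 : (∑ k : Fin d,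
            (u : EuclideanSpace ℝ (Fin d)) k * (u : EuclideanSpace ℝ (Fin d)) k)
            = ∑ k : Fin d, ((u : EuclideanSpace ℝ (Fin d)) k) ^ 2 :=
          Finset.sum_congr rfl fun k _ => by ring
        rw [h2, ← euclid_norm_sq, hu, one_pow]
      simp only [hpt]
      simp
    have hall : ∑ k : Fin d,
        (∫ u : Sph d, (u : EuclideanSpace ℝ (Fin d)) k * (u : EuclideanSpace ℝ (Fin d)) k ∂σ)
        = d * ∫ u : Sph d, (u : EuclideanSpace ℝ (Fin d)) i * (u : EuclideanSpace ℝ (Fin d)) i ∂σ := by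
      rw [Finset.sum_congr rfl fun k _ => hdiag k i]
      simp [Finset.sum_const, Finset.card_univ, nsmul_eq_mul]
    have hdne : (d : ℝ) ≠ 0 := Nat.cast_ne_zero.mpr hd.ne'
    rw [hall] at hsum
    rw [eq_div_iff hdne, mul_comm]
    exact hsum
  · simp only [if_neg hij]
    have hc : Continuous (fun x : EuclideanSpace ℝ (Fin d) => x i * x j) :=
      ((EuclideanSpace.proj i).continuous).mul ((EuclideanSpace.proj j).continuous)
    have hkey := integral_comp_sphereIso σ hσinv
      (LinearIsometryEquiv.piLpCongrRight 2
        (fun k : Fin d => if k = i then LinearIsometryEquiv.neg ℝ else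
          LinearIsometryEquiv.refl ℝ ℝ))
      (fun x => x i * x j) hc
    have happ : ∀ (x : EuclideanSpace ℝ (Fin d)) (m : Fin d),
        (LinearIsometryEquiv.piLpCongrRight 2
          (fun k : Fin d => if k = i then LinearIsometryEquiv.neg ℝ else
            LinearIsometryEquiv.refl ℝ ℝ) x) m
        = if m = i then -(x m) else x m := by
      intro x m
      show (if m = i then LinearIsometryEquiv.neg ℝ else LinearIsometryEquiv.refl ℝ ℝ) (x m)
        = if m = i then -(x m) else x m
      by_cases hm : m = i
      · rw [if_pos hm, if_pos hm]; rfl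
      · rw [if_neg hm, if_neg hm]; rfl
    have hneg : (∫ u : Sph d,
        (u : EuclideanSpace ℝ (Fin d)) i * (u : EuclideanSpace ℝ (Fin d)) j ∂σ)
        = -∫ u : Sph d, (u : EuclideanSpace ℝ (Fin d)) i * (u : EuclideanSpace ℝ (Fin d)) j ∂σ := by
      conv_lhs => rw [← hkey]
      rw [← integral_neg]
      refine integral_congr_ae (Filter.Eventually.of_forall fun u => ?_)
      simp only [happ, eq_self_iff_true, if_true]
      rw [if_neg hij.symm]
      ring
    linarith [hneg]

end Sphere

section Key

/-- The key integral identity. -/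
lemma integral_cov_inner {Ω : Type*} [MeasurableSpace Ω] {d : ℕ} (hd : 0 < d)
    (P : Measure Ω) [IsProbabilityMeasure P]
    (σ : Measure (Sph d)) [IsProbabilityMeasure σ]
    (hσinv : ∀ L : EuclideanSpace ℝ (Fin d) ≃ₗᵢ[ℝ] EuclideanSpace ℝ (Fin d),
      Measure.map (sphereIso L) σ = σ)
    {ξ η : Ω → EuclideanSpace ℝ (Fin d)} (hξm : Measurable ξ) (hηm : Measurable η)
    (hξ2 : Integrable (fun ω => ‖ξ ω‖ ^ 2) P) (hη2 : Integrable (fun ω => ‖η ω‖ ^ 2) P) :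
    ∫ u : Sph d, cov' P (fun ω => ⟪(u : EuclideanSpace ℝ (Fin d)), ξ ω⟫)
        (fun ω => ⟪(u : EuclideanSpace ℝ (Fin d)), η ω⟫) ∂σ
      = (1 / d) * ∑ i : Fin d, cov' P (fun ω => ξ ω i) (fun ω => η ω i) := by
  set c : Fin d → Fin d → ℝ := fun i j => cov' P (fun ω => ξ ω i) (fun ω => η ω j) with hc
  have hexp : (fun u : Sph d => cov' P (fun ω => ⟪(u : EuclideanSpace ℝ (Fin d)), ξ ω⟫)
      (fun ω => ⟪(u : EuclideanSpace ℝ (Fin d)), η ω⟫))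
      = fun u : Sph d => ∑ i, ∑ j,
          (u : EuclideanSpace ℝ (Fin d)) i * (u : EuclideanSpace ℝ (Fin d)) j * c i j :=
    funext fun u => cov'_inner_expand P hξm hηm hξ2 hη2 _
  rw [hexp]
  have hint : ∀ i j : Fin d, Integrable (fun u : Sph d =>
      (u : EuclideanSpace ℝ (Fin d)) i * (u : EuclideanSpace ℝ (Fin d)) j * c i j) σ :=
    fun i j => (sph_mul_integrable σ i j).mul_const _
  rw [integral_finset_sum _ (fun i _ => integrable_finset_sum _ (fun j _ => hint i j))]
  have hterm : ∀ i j : Fin d,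
      (∫ u : Sph d, (u : EuclideanSpace ℝ (Fin d)) i * (u : EuclideanSpace ℝ (Fin d)) j * c i j ∂σ)
      = (if i = j then (1 / d : ℝ) else 0) * c i j := by
    intro i j
    rw [integral_mul_const, sphere_second_moment hd σ hσinv i j]
  calc ∑ i : Fin d, ∫ u : Sph d, (∑ j,
        (u : EuclideanSpace ℝ (Fin d)) i * (u : EuclideanSpace ℝ (Fin d)) j * c i j) ∂σ
      = ∑ i : Fin d, ∑ j : Fin d, (if i = j then (1 / d : ℝ) else 0) * c i j := by
        refine Finset.sum_congr rfl fun i _ => ?_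
        rw [integral_finset_sum _ (fun j _ => hint i j)]
        exact Finset.sum_congr rfl fun j _ => hterm i j
    _ = (1 / d) * ∑ i : Fin d, c i i := by
        rw [Finset.mul_sum]
        refine Finset.sum_congr rfl fun i _ => ?_
        simp [ite_mul, Finset.sum_ite_eq]

end Key

/-- Singleton case, covariance: for random vectors `ξ, η` with finite
second moments, `∫ Cov(⟨u,ξ⟩,⟨u,η⟩) dσ(u) = (1/d)·∑_i Cov(ξ_i,η_i)`; hence for the
singleton support profiles `Cov_loc(X,Y) = (1/d)·∑_i Cov(ξ_i,η_i)` and, when the total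
coordinate variances are positive,
`Corr_loc(X,Y) = ∑_i Cov(ξ_i,η_i) / √((∑_i Var ξ_i)·(∑_i Var η_i))`. -/
theorem singleton_covariance {Ω : Type*} [MeasurableSpace Ω] {d : ℕ} (hd : 0 < d)
    (P : Measure Ω) [IsProbabilityMeasure P]
    (σ : Measure (Sph d)) [IsProbabilityMeasure σ]
    (hσinv : ∀ L : EuclideanSpace ℝ (Fin d) ≃ₗᵢ[ℝ] EuclideanSpace ℝ (Fin d),
      Measure.map (sphereIso L) σ = σ)
    (ξ η : Ω → EuclideanSpace ℝ (Fin d)) (hξm : Measurable ξ) (hηm : Measurable η)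
    (hξη2 : Integrable (fun ω => ‖ξ ω‖ ^ 2) P ∧ Integrable (fun ω => ‖η ω‖ ^ 2) P)
    (hX hY : Ω × Sph d → ℝ)
    (hXdef : ∀ ω u, hX (ω, u) = ⟪(u : EuclideanSpace ℝ (Fin d)), ξ ω⟫)
    (hYdef : ∀ ω u, hY (ω, u) = ⟪(u : EuclideanSpace ℝ (Fin d)), η ω⟫) :
    (∫ u, cov' P (fun ω => ⟪(u : EuclideanSpace ℝ (Fin d)), ξ ω⟫)
        (fun ω => ⟪(u : EuclideanSpace ℝ (Fin d)), η ω⟫) ∂σ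
      = (1 / d) * ∑ i : Fin d, cov' P (fun ω => ξ ω i) (fun ω => η ω i))
    ∧ covLoc P σ hX hY = (1 / d) * ∑ i : Fin d, cov' P (fun ω => ξ ω i) (fun ω => η ω i)
    ∧ ((0 < ∑ i : Fin d, var' P (fun ω => ξ ω i))
        → (0 < ∑ i : Fin d, var' P (fun ω => η ω i))
        → corrLoc P σ hX hY
          = (∑ i : Fin d, cov' P (fun ω => ξ ω i) (fun ω => η ω i))
            / Real.sqrt ((∑ i : Fin d, var' P (fun ω => ξ ω i))
                * (∑ i : Fin d, var' P (fun ω => η ω i)))) := by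
  obtain ⟨hξ2, hη2⟩ := hξη2
  have hmain := integral_cov_inner hd P σ hσinv hξm hηm hξ2 hη2
  have hXodd : ∀ u : Sph d, (fun ω => oddPart hX (ω, u))
      = fun ω => ⟪(u : EuclideanSpace ℝ (Fin d)), ξ ω⟫ := by
    intro u
    funext ω
    simp only [oddPart, hXdef ω u, hXdef ω (-u), coe_neg_sphere, inner_neg_left]
    ring
  have hYodd : ∀ u : Sph d, (fun ω => oddPart hY (ω, u))
      = fun ω => ⟪(u : EuclideanSpace ℝ (Fin d)), η ω⟫ := by
    intro u
    funext ω
    simp only [oddPart, hYdef ω u, hYdef ω (-u), coe_neg_sphere, inner_neg_left]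
    ring
  have hfunXY : (fun u : Sph d => cov' P (fun ω => oddPart hX (ω, u)) fun ω => oddPart hY (ω, u))
      = fun u : Sph d => cov' P (fun ω => ⟪(u : EuclideanSpace ℝ (Fin d)), ξ ω⟫)
          fun ω => ⟪(u : EuclideanSpace ℝ (Fin d)), η ω⟫ := by
    funext u; rw [hXodd u, hYodd u]
  have hcovLoc : covLoc P σ hX hY
      = (1 / d) * ∑ i : Fin d, cov' P (fun ω => ξ ω i) (fun ω => η ω i) := by
    simp only [covLoc]
    rw [hfunXY]
    exact hmain
  refine ⟨hmain, hcovLoc, fun hA hB => ?_⟩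
  have hfunXX : (fun u : Sph d => cov' P (fun ω => oddPart hX (ω, u)) fun ω => oddPart hX (ω, u))
      = fun u : Sph d => cov' P (fun ω => ⟪(u : EuclideanSpace ℝ (Fin d)), ξ ω⟫)
          fun ω => ⟪(u : EuclideanSpace ℝ (Fin d)), ξ ω⟫ := by
    funext u; rw [hXodd u]
  have hfunYY : (fun u : Sph d => cov' P (fun ω => oddPart hY (ω, u)) fun ω => oddPart hY (ω, u))
      = fun u : Sph d => cov' P (fun ω => ⟪(u : EuclideanSpace ℝ (Fin d)), η ω⟫)
          fun ω => ⟪(u : EuclideanSpace ℝ (Fin d)), η ω⟫ := by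
    funext u; rw [hYodd u]
  have hvarX : varLoc P σ hX = (1 / d) * ∑ i : Fin d, var' P (fun ω => ξ ω i) := by
    simp only [varLoc, covLoc, var']
    rw [hfunXX]
    exact integral_cov_inner hd P σ hσinv hξm hξm hξ2 hξ2
  have hvarY : varLoc P σ hY = (1 / d) * ∑ i : Fin d, var' P (fun ω => η ω i) := by
    simp only [varLoc, covLoc, var']
    rw [hfunYY]
    exact integral_cov_inner hd P σ hσinv hηm hηm hη2 hη2
  set S : ℝ := ∑ i : Fin d, cov' P (fun ω => ξ ω i) (fun ω => η ω i)
  set A : ℝ := ∑ i : Fin d, var' P (fun ω => ξ ω i)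
  set B : ℝ := ∑ i : Fin d, var' P (fun ω => η ω i)
  have hdpos : (0 : ℝ) < 1 / d := by positivity
  rw [corrLoc, hcovLoc, hvarX, hvarY]
  have hsq : (1 / (d : ℝ)) * A * ((1 / d) * B) = (1 / d) ^ 2 * (A * B) := by ring
  rw [hsq, Real.sqrt_mul (sq_nonneg _), Real.sqrt_sq hdpos.le]
  rw [mul_div_mul_left _ _ hdpos.ne']


end
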